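/- arXiv:math/0702482 — 2 statements merged into one kernel-verified Lean document; each statement's English description precedes it below -/
import Mathlib

section
/- Let n ≥ 4, suppose Assumption(n-1) holds, and let T be an irreducible finite-dimensional representation of U'_q(so_n). Then the restriction of T to U'_q(so_{n-1}) is completely reducible, and in its decomposition into irreducible subrepresentations either every summand is equivalent to a classical-type representation T_{m_{n-1}}, or every summand is equivalent to a nonclassical-type representation T_{ε,m_{n-1}}. -/
noncomputable section

open scoped Classical
open Finset

namespace UqSO

/-! ## q-numbers.  Arguments are *doubled* half-integers: `qnum q s t` is the
q-number `[t/2]` and `qnumP q s t` is `[t/2]₊`, computed via the fixed square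
root `s` of `q` (so `q^(t/2) = s^t`). -/

def qnum (q s : ℂ) (t : ℤ) : ℂ := (s ^ t - s ^ (-t)) / (q - q⁻¹)

def qnumP (q s : ℂ) (t : ℤ) : ℂ := (s ^ t + s ^ (-t)) / (q - q⁻¹)

/-! ## The algebra `U'_q(so_n)`.
It is generated by `I_{21}, I_{32}, …, I_{n,n-1}`; the generator `gen q n i`
(for `i : Fin (n-1)`) corresponds to `I_{i+2,i+1}`. -/

inductive Rel (q : ℂ) (n : ℕ) :
    FreeAlgebra ℂ (Fin (n - 1)) → FreeAlgebra ℂ (Fin (n - 1)) → Prop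
  | rel1 (i j : Fin (n - 1)) (h : (j : ℕ) = (i : ℕ) + 1) :
      Rel q n
        (FreeAlgebra.ι ℂ i * FreeAlgebra.ι ℂ i * FreeAlgebra.ι ℂ j -
            (q + q⁻¹) • (FreeAlgebra.ι ℂ i * FreeAlgebra.ι ℂ j * FreeAlgebra.ι ℂ i) +
          FreeAlgebra.ι ℂ j * (FreeAlgebra.ι ℂ i * FreeAlgebra.ι ℂ i))
        (-FreeAlgebra.ι ℂ j)
  | rel2 (i j : Fin (n - 1)) (h : (j : ℕ) = (i : ℕ) + 1) :
      Rel q n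
        (FreeAlgebra.ι ℂ i * (FreeAlgebra.ι ℂ j * FreeAlgebra.ι ℂ j) -
            (q + q⁻¹) • (FreeAlgebra.ι ℂ j * FreeAlgebra.ι ℂ i * FreeAlgebra.ι ℂ j) +
          FreeAlgebra.ι ℂ j * FreeAlgebra.ι ℂ j * FreeAlgebra.ι ℂ i)
        (-FreeAlgebra.ι ℂ i)
  | relFar (i j : Fin (n - 1)) (h : (i : ℕ) + 1 < (j : ℕ)) :
      Rel q n (FreeAlgebra.ι ℂ i * FreeAlgebra.ι ℂ j)
        (FreeAlgebra.ι ℂ j * FreeAlgebra.ι ℂ i)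

abbrev Alg (q : ℂ) (n : ℕ) := RingQuot (Rel q n)

def gen (q : ℂ) (n : ℕ) (i : Fin (n - 1)) : Alg q n :=
  RingQuot.mkAlgHom ℂ (Rel q n) (FreeAlgebra.ι ℂ i)

/-- The canonical inclusion `U'_q(so_m) → U'_q(so_n)` for `m ≤ n`, sending
`I_{i+2,i+1}` to `I_{i+2,i+1}`.  Its image is the subalgebra generated by
`I_{21}, …, I_{m,m-1}`. -/
def incl (q : ℂ) {m n : ℕ} (h : m ≤ n) : Alg q m →ₐ[ℂ] Alg q n :=
  RingQuot.liftAlgHom ℂ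
    ⟨(RingQuot.mkAlgHom ℂ (Rel q n)).comp
        (FreeAlgebra.lift ℂ fun i =>
          FreeAlgebra.ι ℂ (Fin.castLE (Nat.sub_le_sub_right h 1) i)),
      by
        intro x y hxy
        induction hxy with
        | rel1 i j hij =>
            have hr := RingQuot.mkAlgHom_rel ℂ
              (Rel.rel1 (q := q) (n := n) (Fin.castLE (Nat.sub_le_sub_right h 1) i)
                (Fin.castLE (Nat.sub_le_sub_right h 1) j) (by simpa using hij))
            simpa using hr
        | rel2 i j hij =>
            have hr := RingQuot.mkAlgHom_rel ℂ
              (Rel.rel2 (q := q) (n := n) (Fin.castLE (Nat.sub_le_sub_right h 1) i)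
                (Fin.castLE (Nat.sub_le_sub_right h 1) j) (by simpa using hij))
            simpa using hr
        | relFar i j hij =>
            have hr := RingQuot.mkAlgHom_rel ℂ
              (Rel.relFar (q := q) (n := n) (Fin.castLE (Nat.sub_le_sub_right h 1) i)
                (Fin.castLE (Nat.sub_le_sub_right h 1) j) (by simpa using hij))
            simpa using hr⟩

/-! ## Gelfand–Tsetlin patterns.
A pattern has rows `s = 0, 1, …, n`; row `s` has `⌊s/2⌋` entries.  All entries
are *doubled* half-integers (i.e. twice their actual value, stored in `ℤ`). -/

def Pattern (n : ℕ) : Type := ∀ s : Fin (n + 1), Fin ((s : ℕ) / 2) → ℤ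

/-- `ent t s j` is the (doubled) entry `m_{j+1,s}` of the pattern `t`
(with junk value `0` out of range). -/
def ent {n : ℕ} (t : Pattern n) (s j : ℕ) : ℤ :=
  if h : s < n + 1 ∧ j < s / 2 then t ⟨s, h.1⟩ ⟨j, h.2⟩ else 0

/-- Doubled `l`-coordinates: `lc t (2p+1) j = 2*l_{j+1,2p+1}`, `lc t (2p) j = 2*l_{j+1,2p}`
where `l_{j,2p+1} = m_{j,2p+1} + p - j + 1`, `l_{j,2p} = m_{j,2p} + p - j`. -/
def lc {n : ℕ} (t : Pattern n) (s j : ℕ) : ℤ :=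
  ent t s j + (if s % 2 = 1 then (s : ℤ) + 1 else (s : ℤ)) - 2 * ((j : ℤ) + 1)

/-- Change the entry `m_{j+1,s}` of the pattern by `d` (doubled). -/
def modify {n : ℕ} (t : Pattern n) (s j : ℕ) (d : ℤ) : Pattern n :=
  fun s' j' => if (s' : ℕ) = s ∧ (j' : ℕ) = j then t s' j' + d else t s' j'

/-- Classical-type Gelfand–Tsetlin tableaux with top row `m`:
top row condition, integrality (all rows integral or all half-odd-integral,
as the top row), and the betweenness conditions. -/
def IsGTc (n : ℕ) (m : Fin (n / 2) → ℤ) (t : Pattern n) : Prop :=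
  (∀ j : Fin (n / 2), ent t n (j : ℕ) = m j) ∧
  (∀ s j : ℕ, 2 ≤ s → s ≤ n → j < s / 2 → (Even (ent t s j) ↔ Even (ent t n 0))) ∧
  (∀ p : ℕ, 1 ≤ p → 2 * p + 1 ≤ n →
    (∀ j : ℕ, j < p → ent t (2 * p) j ≤ ent t (2 * p + 1) j) ∧
    (∀ j : ℕ, j + 1 < p → ent t (2 * p + 1) (j + 1) ≤ ent t (2 * p) j) ∧
    -ent t (2 * p + 1) (p - 1) ≤ ent t (2 * p) (p - 1)) ∧
  (∀ p : ℕ, 2 ≤ p → 2 * p ≤ n →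
    (∀ j : ℕ, j + 1 < p →
      ent t (2 * p - 1) j ≤ ent t (2 * p) j ∧ ent t (2 * p) (j + 1) ≤ ent t (2 * p - 1) j) ∧
    -ent t (2 * p) (p - 1) ≤ ent t (2 * p - 1) (p - 2))

/-- Nonclassical-type tableaux with top row `m`: all entries half-odd-integral
and the betweenness conditions with lower bound `1/2`. -/
def IsGTn (n : ℕ) (m : Fin (n / 2) → ℤ) (t : Pattern n) : Prop :=
  (∀ j : Fin (n / 2), ent t n (j : ℕ) = m j) ∧
  (∀ s j : ℕ, 2 ≤ s → s ≤ n → j < s / 2 → Odd (ent t s j)) ∧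
  (∀ p : ℕ, 1 ≤ p → 2 * p + 1 ≤ n →
    (∀ j : ℕ, j < p → ent t (2 * p) j ≤ ent t (2 * p + 1) j) ∧
    (∀ j : ℕ, j + 1 < p → ent t (2 * p + 1) (j + 1) ≤ ent t (2 * p) j) ∧
    1 ≤ ent t (2 * p) (p - 1)) ∧
  (∀ p : ℕ, 2 ≤ p → 2 * p ≤ n →
    ∀ j : ℕ, j + 1 < p →
      ent t (2 * p - 1) j ≤ ent t (2 * p) j ∧ ent t (2 * p) (j + 1) ≤ ent t (2 * p - 1) j)

def GTc (n : ℕ) (m : Fin (n / 2) → ℤ) : Type := { t : Pattern n // IsGTc n m t }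

def GTn (n : ℕ) (m : Fin (n / 2) → ℤ) : Type := { t : Pattern n // IsGTn n m t }

/-! ## The coefficients of the explicit formulas. -/

section Coeffs

variable (q s : ℂ) {n : ℕ}

/-- `A^j_{2p}(α)` (here `j` is 0-indexed). -/
def Acoef (t : Pattern n) (p j : ℕ) : ℂ :=
  ((((∏ i ∈ range p,
        qnum q s (lc t (2*p+1) i + lc t (2*p) j) *
          qnum q s (lc t (2*p+1) i - lc t (2*p) j - 2)) *
       ∏ i ∈ range (p-1),
        qnum q s (lc t (2*p-1) i + lc t (2*p) j) *
          qnum q s (lc t (2*p-1) i - lc t (2*p) j - 2)) /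
     ∏ i ∈ (range p).erase j,
        qnum q s (lc t (2*p) i + lc t (2*p) j) * qnum q s (lc t (2*p) i - lc t (2*p) j) *
          qnum q s (lc t (2*p) i + lc t (2*p) j + 2) *
          qnum q s (lc t (2*p) i - lc t (2*p) j - 2)) : ℂ) ^ ((1:ℂ)/2)

/-- `B^j_{2p-1}(α)` (here `j` is 0-indexed). -/
def Bcoef (t : Pattern n) (p j : ℕ) : ℂ :=
  ((((∏ i ∈ range p,
        qnum q s (lc t (2*p) i + lc t (2*p-1) j) * qnum q s (lc t (2*p) i - lc t (2*p-1) j)) *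
       ∏ i ∈ range (p-1),
        qnum q s (lc t (2*p-2) i + lc t (2*p-1) j) *
          qnum q s (lc t (2*p-2) i - lc t (2*p-1) j)) /
     ∏ i ∈ (range (p-1)).erase j,
        qnum q s (lc t (2*p-1) i + lc t (2*p-1) j) * qnum q s (lc t (2*p-1) i - lc t (2*p-1) j) *
          qnum q s (lc t (2*p-1) i + lc t (2*p-1) j - 2) *
          qnum q s (lc t (2*p-1) i - lc t (2*p-1) j - 2)) : ℂ) ^ ((1:ℂ)/2)

/-- `C_{2p-1}(α)`. -/
def Ccoef (t : Pattern n) (p : ℕ) : ℂ :=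
  ((∏ i ∈ range p, qnum q s (lc t (2*p) i)) * ∏ i ∈ range (p-1), qnum q s (lc t (2*p-2) i)) /
    ∏ i ∈ range (p-1), qnum q s (lc t (2*p-1) i) * qnum q s (lc t (2*p-1) i - 2)

/-- `Ĉ_{2p-1}(α)`. -/
def ChatCoef (t : Pattern n) (p : ℕ) : ℂ :=
  ((∏ i ∈ range p, qnumP q s (lc t (2*p) i)) * ∏ i ∈ range (p-1), qnumP q s (lc t (2*p-2) i)) /
    ∏ i ∈ range (p-1), qnumP q s (lc t (2*p-1) i) * qnumP q s (lc t (2*p-1) i - 2)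

/-- `D_{2p}(α)`. -/
def Dcoef (t : Pattern n) (p : ℕ) : ℂ :=
  ((∏ i ∈ range p, qnum q s (lc t (2*p+1) i - 1)) *
      ∏ i ∈ range (p-1), qnum q s (lc t (2*p-1) i - 1)) /
    ∏ i ∈ range (p-1), qnum q s (lc t (2*p) i + 1) * qnum q s (lc t (2*p) i - 1)

/-- `a(l) = ((q^{l+1}+q^{-l-1})(q^{l}+q^{-l}))^{1/2}` (doubled argument). -/
def aval (L : ℤ) : ℂ := ((s ^ (L+2) + s ^ (-(L+2))) * (s ^ L + s ^ (-L))) ^ ((1:ℂ)/2)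

/-- `a'(l) = ((q^{l+1}-q^{-l-1})(q^{l}-q^{-l}))^{1/2}` (doubled argument). -/
def a'val (L : ℤ) : ℂ := ((s ^ (L+2) - s ^ (-(L+2))) * (s ^ L - s ^ (-L))) ^ ((1:ℂ)/2)

/-- `b(l) = ([2l+1][2l-1])^{1/2}` (doubled argument). -/
def bval (L : ℤ) : ℂ := (qnum q s (2*L+2) * qnum q s (2*L-2)) ^ ((1:ℂ)/2)

end Coeffs

/-! ## The explicit model operators. -/

section Ops

variable (q s : ℂ) {n : ℕ} {m : Fin (n / 2) → ℤ}

/-- A single raising/lowering term: the basis vector of the modified tableau with the given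
coefficient, the term being omitted if the modified tableau is inadmissible. -/
def ctermC (t' : Pattern n) (c : ℂ) : GTc n m →₀ ℂ :=
  if h : IsGTc n m t' then Finsupp.single ⟨t', h⟩ c else 0

def ntermC (t' : Pattern n) (c : ℂ) : GTn n m →₀ ℂ :=
  if h : IsGTn n m t' then Finsupp.single ⟨t', h⟩ c else 0

/-- Action of `I_{2p+1,2p}` on a classical-type basis vector (formula (8)). -/
def actOddC (p : ℕ) (α : GTc n m) : GTc n m →₀ ℂ :=
  (∑ j ∈ range p,
      ctermC (modify α.1 (2*p) j 2) (Acoef q s α.1 p j / aval s (lc α.1 (2*p) j))) -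
    ∑ j ∈ range p,
      ctermC (modify α.1 (2*p) j (-2))
        (Acoef q s (modify α.1 (2*p) j (-2)) p j / aval s (lc α.1 (2*p) j - 2))

/-- Action of `I_{2p,2p-1}` on a classical-type basis vector (formula (9)). -/
def actEvenC (p : ℕ) (α : GTc n m) : GTc n m →₀ ℂ :=
  ((∑ j ∈ range (p-1),
      ctermC (modify α.1 (2*p-1) j 2)
        (Bcoef q s α.1 p j / (bval q s (lc α.1 (2*p-1) j) * qnum q s (lc α.1 (2*p-1) j)))) -
    ∑ j ∈ range (p-1),
      ctermC (modify α.1 (2*p-1) j (-2))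
        (Bcoef q s (modify α.1 (2*p-1) j (-2)) p j /
          (bval q s (lc α.1 (2*p-1) j - 2) * qnum q s (lc α.1 (2*p-1) j - 2)))) +
    Finsupp.single α (Complex.I * Ccoef q s α.1 p)

/-- The operator of the classical-type representation `T_{m}` corresponding to the
generator `I_{g+2,g+1}`. -/
def classicalOp (n : ℕ) (m : Fin (n / 2) → ℤ) (g : Fin (n - 1)) :
    (GTc n m →₀ ℂ) →ₗ[ℂ] GTc n m →₀ ℂ :=
  Finsupp.lift _ ℂ _ fun α =>
    if (g : ℕ) % 2 = 1 then actOddC q s (((g : ℕ) + 1) / 2) α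
    else actEvenC q s (((g : ℕ) + 2) / 2) α

/-- Action of `I_{2p+1,2p}` on a nonclassical-type basis vector (formula (14));
`e` is the sign `ε_{2p+1}`. -/
def actOddN (e : ℂ) (p : ℕ) (α : GTn n m) : GTn n m →₀ ℂ :=
  Finsupp.single α
      (if ent α.1 (2*p) (p-1) = 1 then e / (s - s⁻¹) * Dcoef q s α.1 p else 0) +
    ((∑ j ∈ range p,
        ntermC (modify α.1 (2*p) j 2) (Acoef q s α.1 p j / a'val s (lc α.1 (2*p) j))) -
      ∑ j ∈ range p,
        ntermC (modify α.1 (2*p) j (-2))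
          (Acoef q s (modify α.1 (2*p) j (-2)) p j / a'val s (lc α.1 (2*p) j - 2)))

/-- Action of `I_{2p,2p-1}` on a nonclassical-type basis vector (formula (15));
`e` is the sign `ε_{2p}`. -/
def actEvenN (e : ℂ) (p : ℕ) (α : GTn n m) : GTn n m →₀ ℂ :=
  ((∑ j ∈ range (p-1),
      ntermC (modify α.1 (2*p-1) j 2)
        (Bcoef q s α.1 p j / (bval q s (lc α.1 (2*p-1) j) * qnumP q s (lc α.1 (2*p-1) j)))) -
    ∑ j ∈ range (p-1),
      ntermC (modify α.1 (2*p-1) j (-2))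
        (Bcoef q s (modify α.1 (2*p-1) j (-2)) p j /
          (bval q s (lc α.1 (2*p-1) j - 2) * qnumP q s (lc α.1 (2*p-1) j - 2)))) +
    Finsupp.single α (e * ChatCoef q s α.1 p)

/-- The operator of the nonclassical-type representation `T_{ε,m}` corresponding to the
generator `I_{g+2,g+1}`; here `ε i` is the sign `ε_{i+2}`. -/
def nonclassicalOp (n : ℕ) (ε : Fin (n - 1) → ℂ) (m : Fin (n / 2) → ℤ) (g : Fin (n - 1)) :
    (GTn n m →₀ ℂ) →ₗ[ℂ] GTn n m →₀ ℂ :=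
  Finsupp.lift _ ℂ _ fun α =>
    if (g : ℕ) % 2 = 1 then actOddN q s (ε g) (((g : ℕ) + 1) / 2) α
    else actEvenN q s (ε g) (((g : ℕ) + 2) / 2) α

end Ops

/-! ## Admissible weights and signs. -/

/-- Admissible classical-type highest weight for `U'_q(so_n)` (doubled entries). -/
def ClassicalWeight (n : ℕ) (m : Fin (n / 2) → ℤ) : Prop :=
  ((∀ i, Even (m i)) ∨ (∀ i, Odd (m i))) ∧
  (∀ i j : Fin (n / 2), i ≤ j → m j ≤ m i) ∧
  (n % 2 = 1 → ∀ i, 0 ≤ m i) ∧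
  (n % 2 = 0 → ∀ i : Fin (n / 2), ∀ _h : (i : ℕ) + 1 < n / 2,
    -m ⟨n / 2 - 1, by omega⟩ ≤ m i)

/-- Admissible nonclassical-type highest weight (doubled entries; all entries are
half-odd-integral, decreasing, and `≥ 1/2`). -/
def NonclassicalWeight (n : ℕ) (m : Fin (n / 2) → ℤ) : Prop :=
  (∀ i, Odd (m i)) ∧ (∀ i j : Fin (n / 2), i ≤ j → m j ≤ m i) ∧ ∀ i, 1 ≤ m i

def IsSign {k : ℕ} (ε : Fin k → ℂ) : Prop := ∀ i, ε i = 1 ∨ ε i = -1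

/-! ## Representations. -/

section Reps

variable {q : ℂ} {n : ℕ}

/-- A submodule invariant under a representation. -/
def Invariant {V : Type} [AddCommGroup V] [Module ℂ V]
    (T : Alg q n →ₐ[ℂ] Module.End ℂ V) (W : Submodule ℂ V) : Prop :=
  ∀ a : Alg q n, ∀ v ∈ W, T a v ∈ W

/-- Irreducibility (on a nonzero space). -/
def Irr {V : Type} [AddCommGroup V] [Module ℂ V]
    (T : Alg q n →ₐ[ℂ] Module.End ℂ V) : Prop :=
  ∀ W : Submodule ℂ V, Invariant T W → W = ⊥ ∨ W = ⊤

/-- `W` is an invariant subspace on which an irreducible subrepresentation is realized. -/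
def IsIrredSub {V : Type} [AddCommGroup V] [Module ℂ V]
    (T : Alg q n →ₐ[ℂ] Module.End ℂ V) (W : Submodule ℂ V) : Prop :=
  Invariant T W ∧ W ≠ ⊥ ∧
    ∀ U : Submodule ℂ V, U ≤ W → Invariant T U → U = ⊥ ∨ U = W

/-- `W` is a decomposition of the representation space as a direct sum of invariant
subspaces on each of which an irreducible representation is realized. -/
def IsDecomp {V : Type} [AddCommGroup V] [Module ℂ V]
    (T : Alg q n →ₐ[ℂ] Module.End ℂ V) {ι : Type} (W : ι → Submodule ℂ V) : Prop :=
  (∀ i, IsIrredSub T (W i)) ∧ iSupIndep W ∧ ⨆ i, W i = ⊤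

/-- Complete reducibility. -/
def CompRed {V : Type} [AddCommGroup V] [Module ℂ V]
    (T : Alg q n →ₐ[ℂ] Module.End ℂ V) : Prop :=
  ∃ (ι : Type) (W : ι → Submodule ℂ V), IsDecomp T W

/-- The subrepresentation on an invariant subspace. -/
def subRep {V : Type} [AddCommGroup V] [Module ℂ V] (T : Alg q n →ₐ[ℂ] Module.End ℂ V)
    (W : Submodule ℂ V) (hW : Invariant T W) : Alg q n →ₐ[ℂ] Module.End ℂ W where
  toFun a := (T a).restrict (q := W) fun v hv => hW a v hv
  map_one' := by
    ext v
    simp [LinearMap.restrict_apply]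
  map_mul' a b := by
    ext v
    simp [LinearMap.restrict_apply, map_mul, Module.End.mul_apply]
  map_zero' := by
    ext v
    simp [LinearMap.restrict_apply]
  map_add' a b := by
    ext v
    simp [LinearMap.restrict_apply, map_add, LinearMap.add_apply]
  commutes' c := by
    ext v
    simp [LinearMap.restrict_apply, Module.algebraMap_end_apply]

/-- Equivalence of two representations (of the same algebra, on possibly different spaces). -/
def RepEquiv {V W : Type} [AddCommGroup V] [Module ℂ V] [AddCommGroup W] [Module ℂ W]
    (T : Alg q n →ₐ[ℂ] Module.End ℂ V) (S : Alg q n →ₐ[ℂ] Module.End ℂ W) : Prop :=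
  ∃ e : V ≃ₗ[ℂ] W, ∀ (a : Alg q n) (v : V), e (T a v) = S a (e v)

end Reps

/-- `T` is equivalent to the classical-type representation `T_m`:
there is a linear isomorphism with the Gelfand–Tsetlin model intertwining all the
generators (hence the whole algebra). -/
def IsClassicalModel (q s : ℂ) {n : ℕ} {V : Type} [AddCommGroup V] [Module ℂ V]
    (T : Alg q n →ₐ[ℂ] Module.End ℂ V) (m : Fin (n / 2) → ℤ) : Prop :=
  ∃ e : V ≃ₗ[ℂ] (GTc n m →₀ ℂ), ∀ (g : Fin (n - 1)) (v : V),
    e (T (gen q n g) v) = classicalOp q s n m g (e v)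

/-- `T` is equivalent to the nonclassical-type representation `T_{ε,m}`. -/
def IsNonclassicalModel (q s : ℂ) {n : ℕ} {V : Type} [AddCommGroup V] [Module ℂ V]
    (T : Alg q n →ₐ[ℂ] Module.End ℂ V) (ε : Fin (n - 1) → ℂ) (m : Fin (n / 2) → ℤ) : Prop :=
  ∃ e : V ≃ₗ[ℂ] (GTn n m →₀ ℂ), ∀ (g : Fin (n - 1)) (v : V),
    e (T (gen q n g) v) = nonclassicalOp q s n ε m g (e v)

/-- A finite-dimensional representation of `U'_q(so_n)` on a nonzero space. -/
structure Rep (q : ℂ) (n : ℕ) where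
  V : Type
  [addCommGroup : AddCommGroup V]
  [module : Module ℂ V]
  [finite : FiniteDimensional ℂ V]
  [nontrivial : Nontrivial V]
  T : Alg q n →ₐ[ℂ] Module.End ℂ V

attribute [instance] Rep.addCommGroup Rep.module Rep.finite Rep.nontrivial

/-- The restriction of a representation to the subalgebra `U'_q(so_m)`, `m ≤ n`. -/
def Rep.res {q : ℂ} {n : ℕ} (R : Rep q n) {m : ℕ} (hm : m ≤ n) :
    Alg q m →ₐ[ℂ] Module.End ℂ R.V :=
  R.T.comp (incl q hm)

/-- `c` is an eigenvalue of the endomorphism `f`. -/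
def HasEig {V : Type} [AddCommGroup V] [Module ℂ V] (f : Module.End ℂ V) (c : ℂ) : Prop :=
  ∃ v : V, v ≠ 0 ∧ f v = c • v

/-- An eigenvalue of the classical type: `i·[m]` with `m ∈ (1/2)ℤ`. -/
def ClassicalEig (q s c : ℂ) : Prop := ∃ t : ℤ, c = Complex.I * qnum q s t

/-- An eigenvalue of the nonclassical type: `[m]₊` with `m ∈ ℤ + 1/2`. -/
def NonclassicalEig (q s c : ℂ) : Prop := ∃ t : ℤ, Odd t ∧ c = qnumP q s t

/-- A representation of the classical type: all eigenvalues of all the operators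
`T(I_{2i,2i-1})` (the generators with even index) are of the classical type. -/
def ClassicalType (q s : ℂ) {n : ℕ} {V : Type} [AddCommGroup V] [Module ℂ V]
    (T : Alg q n →ₐ[ℂ] Module.End ℂ V) : Prop :=
  ∀ g : Fin (n - 1), (g : ℕ) % 2 = 0 →
    ∀ c : ℂ, HasEig (T (gen q n g)) c → ClassicalEig q s c

/-- A representation of the nonclassical type. -/
def NonclassicalType (q s : ℂ) {n : ℕ} {V : Type} [AddCommGroup V] [Module ℂ V]
    (T : Alg q n →ₐ[ℂ] Module.End ℂ V) : Prop :=
  ∀ g : Fin (n - 1), (g : ℕ) % 2 = 0 →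
    ∀ c : ℂ, HasEig (T (gen q n g)) c → NonclassicalEig q s c

/-- Assumption(N): every finite-dimensional representation of `U'_q(so_N)` is completely
reducible, and every irreducible one is equivalent to a classical-type or a
nonclassical-type representation. -/
def Assumption (q s : ℂ) (N : ℕ) : Prop :=
  (∀ R : Rep q N, CompRed R.T) ∧
  ∀ R : Rep q N, Irr R.T →
    (∃ m : Fin (N / 2) → ℤ, ClassicalWeight N m ∧ IsClassicalModel q s R.T m) ∨
    (∃ (ε : Fin (N - 1) → ℂ) (m : Fin (N / 2) → ℤ),
      IsSign ε ∧ NonclassicalWeight N m ∧ IsNonclassicalModel q s R.T ε m)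

end UqSO

namespace UqSO

/-! ### Auxiliary lemmas for Proposition 3. -/

section AuxLemmas

/-- If `s ^ k = ± i` for an integer `k`, then `q = s ^ 2` is a root of unity or we get a
contradiction. -/
lemma no_power_eq_pm_I {q s : ℂ} (hq : q ≠ 0) (hs : s ^ 2 = q)
    (hroot : ∀ k : ℕ, 0 < k → q ^ k ≠ 1) {k : ℤ}
    (h : s ^ k = Complex.I ∨ s ^ k = -Complex.I) : False := by
  have hs0 : s ≠ 0 := by
    rintro rfl
    apply hq
    rw [← hs]
    ring
  rcases eq_or_ne k 0 with rfl | hk0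
  · rcases h with h | h <;> rw [zpow_zero] at h <;>
      simpa [Complex.ext_iff] using h
  · have h4 : s ^ (4 * k) = 1 := by
      have : (s ^ k) ^ (4 : ℕ) = 1 := by
        rcases h with h | h <;> rw [h] <;>
          norm_num [pow_succ, Complex.I_mul_I]
      rw [← zpow_natCast (s ^ k) 4, ← zpow_mul, mul_comm] at this
      exact this
    have hq2k : q ^ (2 * k) = 1 := by
      have : s ^ (4 * k) = (s ^ (2 : ℕ)) ^ (2 * k) := by
        rw [← zpow_natCast s 2, ← zpow_mul]
        ring_nf
      rw [this, hs] at h4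
      exact h4
    have hnat : q ^ ((2 * k).natAbs) = 1 := by
      rcases Int.natAbs_eq (2 * k) with he | he
      · rw [← zpow_natCast q, ← he, hq2k]
      · have : q ^ (-((2 * k).natAbs : ℤ)) = 1 := by rw [← he, hq2k]
        rw [zpow_neg, inv_eq_one, zpow_natCast] at this
        exact this
    exact hroot _ (Int.natAbs_pos.mpr (mul_ne_zero two_ne_zero hk0)) hnat

/-- Disjointness of classical and nonclassical eigenvalues. -/
lemma classical_ne_nonclassical {q s : ℂ} (hq : q ≠ 0) (hs : s ^ 2 = q)
    (hroot : ∀ k : ℕ, 0 < k → q ^ k ≠ 1) (t t' : ℤ)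
    (h : Complex.I * qnum q s t = qnumP q s t' ∨
      Complex.I * qnum q s t = -qnumP q s t') : False := by
  have hs0 : s ≠ 0 := by
    rintro rfl
    apply hq
    rw [← hs]
    ring
  have hd : q - q⁻¹ ≠ 0 := by
    intro hd0
    apply hroot 2 (by norm_num)
    have h1 : q * q - 1 = q * (q - q⁻¹) := by field_simp
    have h2 : q * q - 1 = 0 := by rw [h1, hd0, mul_zero]
    rw [pow_two]
    linear_combination h2
  rw [qnum, qnumP, zpow_neg, zpow_neg] at h
  set X := s ^ t with hX
  set Y := s ^ t' with hY
  have hX0 : X ≠ 0 := zpow_ne_zero _ hs0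
  have hY0 : Y ≠ 0 := zpow_ne_zero _ hs0
  have hXinv : X * X⁻¹ = 1 := mul_inv_cancel₀ hX0
  have hYinv : Y * Y⁻¹ = 1 := mul_inv_cancel₀ hY0
  have hsub : s ^ (t - t') = X * Y⁻¹ := by rw [zpow_sub₀ hs0, div_eq_mul_inv]
  have hadd : s ^ (t + t') = X * Y := by rw [zpow_add₀ hs0]
  rcases h with h | h
  · have h1 : Complex.I * (X - X⁻¹) = Y + Y⁻¹ := by
      have h2 := congrArg (· * (q - q⁻¹)) h
      rwa [mul_assoc, div_mul_cancel₀ _ hd, div_mul_cancel₀ _ hd] at h2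
    have h'' : Complex.I * (X * X * Y - Y) = X * (Y * Y) + X := by
      linear_combination X * Y * h1 + Complex.I * Y * hXinv + X * hYinv
    have hfac : (X + Complex.I * Y) * (1 - Complex.I * (X * Y)) = 0 := by
      linear_combination (-1 : ℂ) * h'' - X * Y ^ 2 * Complex.I_sq
    rcases mul_eq_zero.mp hfac with h0 | h0
    · refine no_power_eq_pm_I hq hs hroot (k := t - t') (Or.inr ?_)
      rw [hsub]
      have h3 : X = -Complex.I * Y := by linear_combination h0
      rw [h3]
      field_simp
    · refine no_power_eq_pm_I hq hs hroot (k := t + t') (Or.inr ?_)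
      rw [hadd]
      have hIXY : Complex.I * (X * Y) = 1 := by linear_combination -h0
      linear_combination (-Complex.I) * hIXY + X * Y * Complex.I_sq
  · have h1 : Complex.I * (X - X⁻¹) = -(Y + Y⁻¹) := by
      have h2 := congrArg (· * (q - q⁻¹)) h
      rwa [mul_assoc, div_mul_cancel₀ _ hd, neg_mul, div_mul_cancel₀ _ hd] at h2
    have h'' : Complex.I * (X * X * Y - Y) = -(X * (Y * Y) + X) := by
      linear_combination X * Y * h1 + Complex.I * Y * hXinv - X * hYinv
    have hfac : (X - Complex.I * Y) * (1 + Complex.I * (X * Y)) = 0 := by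
      linear_combination h'' - X * Y ^ 2 * Complex.I_sq
    rcases mul_eq_zero.mp hfac with h0 | h0
    · refine no_power_eq_pm_I hq hs hroot (k := t - t') (Or.inl ?_)
      rw [hsub]
      have h3 : X = Complex.I * Y := by linear_combination h0
      rw [h3]
      field_simp
    · refine no_power_eq_pm_I hq hs hroot (k := t + t') (Or.inl ?_)
      rw [hadd]
      have hIXY : Complex.I * (X * Y) = -1 := by linear_combination h0
      linear_combination (-Complex.I) * hIXY + X * Y * Complex.I_sq

variable {V : Type} [AddCommGroup V] [Module ℂ V]

/-- If a finitely supported family of vectors lying in an independent family of submodules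
sums to zero, each member vanishes. -/
lemma finsupp_eq_zero_of_iSupIndep {E : ℂ → Submodule ℂ V} (hE : iSupIndep E)
    (F : ℂ →₀ V) (hF : ∀ c, F c ∈ E c) (hsum : (F.sum fun _ v => v) = 0) (c₀ : ℂ) :
    F c₀ = 0 := by
  by_cases hc : c₀ ∈ F.support
  · have h1 : F c₀ + ∑ c ∈ F.support.erase c₀, F c = 0 := by
      rw [Finset.add_sum_erase _ _ hc]
      simpa [Finsupp.sum] using hsum
    have h2 : F c₀ ∈ ⨆ c, ⨆ _ : c ≠ c₀, E c := by
      rw [eq_neg_of_add_eq_zero_left h1]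
      refine neg_mem (Submodule.sum_mem _ fun c hcm => ?_)
      exact Submodule.mem_iSup_of_mem c
        (Submodule.mem_iSup_of_mem (Finset.ne_of_mem_erase hcm) (hF c))
    exact Submodule.disjoint_def.mp (hE c₀) _ (hF c₀) h2
  · exact Finsupp.notMem_support_iff.mp hc

/-- Independent families of submodules indexed by disjoint predicates have disjoint
suprema. -/
lemma disjoint_biSup_biSup {E : ℂ → Submodule ℂ V} (hE : iSupIndep E) {P Q : ℂ → Prop}
    (hPQ : ∀ c, P c → Q c → False) :
    Disjoint (⨆ c, ⨆ _ : P c, E c) (⨆ c, ⨆ _ : Q c, E c) := by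
  rw [Submodule.disjoint_def]
  intro x hxP hxQ
  rw [Submodule.mem_iSup_iff_exists_finsupp] at hxP hxQ
  obtain ⟨f, hf, hfs⟩ := hxP
  obtain ⟨g, hg, hgs⟩ := hxQ
  have hf' : ∀ c, f c ∈ E c := fun c =>
    (iSup_le fun _ => le_rfl : (⨆ _ : P c, E c) ≤ E c) (hf c)
  have hg' : ∀ c, g c ∈ E c := fun c =>
    (iSup_le fun _ => le_rfl : (⨆ _ : Q c, E c) ≤ E c) (hg c)
  have hzero : ∀ c, (f - g) c = 0 := by
    refine finsupp_eq_zero_of_iSupIndep hE (f - g) (fun c => ?_) ?_ 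
    · rw [Finsupp.sub_apply]
      exact sub_mem (hf' c) (hg' c)
    · have hrfl : ∀ h : ℂ →₀ V, (h.sum fun _ v => v) =
          (Finsupp.lsum ℂ fun _ : ℂ => (LinearMap.id : V →ₗ[ℂ] V)) h := fun h => rfl
      rw [hrfl, map_sub, ← hrfl, ← hrfl, hfs, hgs, sub_self]
  have hfzero : ∀ c, f c = 0 := by
    intro c
    by_cases hPc : P c
    · have hQc : ¬ Q c := fun hQc => hPQ c hPc hQc
      have : g c = 0 := by
        have h3 : g c ∈ (⊥ : Submodule ℂ V) := by
          have h4 : g c ∈ ⨆ _ : Q c, E c := hg c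
          rwa [iSup_neg hQc] at h4
        simpa using h3
      have h2 := hzero c
      rw [Finsupp.sub_apply, this, sub_zero] at h2
      exact h2
    · have h3 : f c ∈ (⊥ : Submodule ℂ V) := by
        have h4 : f c ∈ ⨆ _ : P c, E c := hf c
        rwa [iSup_neg hPc] at h4
      simpa using h3
  rw [← hfs]
  rw [Finsupp.sum]
  refine Finset.sum_eq_zero fun c _ => hfzero c

/-- A submodule with a basis of eigenvectors (with eigenvalues satisfying `P`) is contained
in the corresponding supremum of eigenspaces. -/
lemma le_biSup_eigenspace (A : Module.End ℂ V) (W : Submodule ℂ V) {β : Type}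
    (e : ↥W ≃ₗ[ℂ] (β →₀ ℂ)) (P : ℂ → Prop)
    (h : ∀ α : β, ∃ c, P c ∧
      A ↑(e.symm (Finsupp.single α 1)) = c • (↑(e.symm (Finsupp.single α 1)) : V)) :
    W ≤ ⨆ c, ⨆ _ : P c, Module.End.eigenspace A c := by
  intro v hv
  have hrep : (⟨v, hv⟩ : W) = (e ⟨v, hv⟩).sum fun α c => c • e.symm (Finsupp.single α 1) := by
    calc (⟨v, hv⟩ : W) = e.symm ((e ⟨v, hv⟩).sum fun α c => Finsupp.single α c) := by
          rw [Finsupp.sum_single, e.symm_apply_apply]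
      _ = (e ⟨v, hv⟩).sum fun α c => e.symm (Finsupp.single α c) := by
          rw [Finsupp.sum, Finsupp.sum, map_sum]
      _ = (e ⟨v, hv⟩).sum fun α c => c • e.symm (Finsupp.single α 1) := by
          refine Finsupp.sum_congr fun α _ => ?_
          rw [← map_smul, Finsupp.smul_single', mul_one]
  have hv2 : v = ∑ α ∈ (e ⟨v, hv⟩).support,
      ((e ⟨v, hv⟩) α • (↑(e.symm (Finsupp.single α 1)) : V)) := by
    have := congrArg (W.subtype) hrep
    simpa [Finsupp.sum, map_sum] using this
  rw [hv2]
  refine Submodule.sum_mem _ fun α _ => Submodule.smul_mem _ _ ?_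
  obtain ⟨c, hPc, hc⟩ := h α
  exact Submodule.mem_iSup_of_mem c
    (Submodule.mem_iSup_of_mem hPc (Module.End.mem_eigenspace_iff.mpr hc))

end AuxLemmas

section AlgebraLemmas

variable {q : ℂ} {n : ℕ}

lemma incl_gen {m n : ℕ} {q : ℂ} (h : m ≤ n) (i : Fin (m - 1)) :
    incl q h (gen q m i) = gen q n (Fin.castLE (Nat.sub_le_sub_right h 1) i) := by
  rw [incl, gen, gen, RingQuot.liftAlgHom_mkAlgHom_apply]
  simp

lemma gen_comm (i j : Fin (n - 1)) (h : (i : ℕ) + 1 < (j : ℕ)) :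
    gen q n i * gen q n j = gen q n j * gen q n i := by
  have := RingQuot.mkAlgHom_rel ℂ (Rel.relFar (q := q) (n := n) i j h)
  simpa [gen, map_mul] using this

lemma invariant_of_forall_gen {V : Type} [AddCommGroup V] [Module ℂ V]
    (T : Alg q n →ₐ[ℂ] Module.End ℂ V) (M : Submodule ℂ V)
    (h : ∀ g, ∀ v ∈ M, T (gen q n g) v ∈ M) : Invariant T M := by
  intro a
  obtain ⟨x, rfl⟩ := RingQuot.mkAlgHom_surjective ℂ (Rel q n) a
  induction x using FreeAlgebra.induction with
  | grade0 r =>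
      intro v hv
      rw [AlgHom.commutes, AlgHom.commutes]
      rw [Module.algebraMap_end_apply]
      exact Submodule.smul_mem _ _ hv
  | grade1 i => exact h i
  | mul a b ha hb =>
      intro v hv
      rw [map_mul, map_mul, Module.End.mul_apply]
      exact ha _ (hb v hv)
  | add a b ha hb =>
      intro v hv
      rw [map_add, map_add, LinearMap.add_apply]
      exact add_mem (ha v hv) (hb v hv)

lemma irr_subRep {V : Type} [AddCommGroup V] [Module ℂ V]
    (T : Alg q n →ₐ[ℂ] Module.End ℂ V) (W : Submodule ℂ V) (h : IsIrredSub T W) :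
    Irr (subRep T W h.1) := by
  intro U hU
  have hinj := Submodule.map_injective_of_injective (Submodule.injective_subtype W)
  have hmap : Invariant T (U.map W.subtype) := by
    intro a v hv
    obtain ⟨u, hu, rfl⟩ := Submodule.mem_map.mp hv
    refine Submodule.mem_map.mpr ⟨subRep T W h.1 a u, hU a u hu, ?_⟩
    rfl
  rcases h.2.2 _ (Submodule.map_subtype_le W U) hmap with h0 | h1
  · left
    apply hinj
    rw [h0, Submodule.map_bot]
  · right
    apply hinj
    rw [h1, Submodule.map_subtype_top]

lemma mapsto_biSup {V : Type} [AddCommGroup V] [Module ℂ V] (f : Module.End ℂ V)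
    {κ : Type} (W : κ → Submodule ℂ V) (P : κ → Prop)
    (h : ∀ i, P i → ∀ v ∈ W i, f v ∈ W i) :
    ∀ v ∈ ⨆ i, ⨆ _ : P i, W i, f v ∈ ⨆ i, ⨆ _ : P i, W i := by
  have hle : (⨆ i, ⨆ _ : P i, W i) ≤ Submodule.comap f (⨆ i, ⨆ _ : P i, W i) := by
    refine iSup₂_le fun i hi => ?_
    intro v hv
    exact Submodule.mem_comap.mpr
      ((le_iSup₂ (f := fun i (_ : P i) => W i) i hi) (h i hi v hv))
  exact fun v hv => hle hv

end AlgebraLemmas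

section ModelLemmas

variable (q s : ℂ)

lemma classicalOp_single_zero {n : ℕ} (m : Fin (n / 2) → ℤ) (g : Fin (n - 1))
    (hg : (g : ℕ) = 0) (α : GTc n m) :
    classicalOp q s n m g (Finsupp.single α 1) =
      (Complex.I * qnum q s (lc α.1 2 0)) • Finsupp.single α 1 := by
  rw [classicalOp]
  rw [Finsupp.lift_apply, Finsupp.sum_single_index (by simp)]
  rw [hg]
  norm_num
  rw [actEvenC]
  norm_num
  rw [show Ccoef q s α.1 1 = qnum q s (lc α.1 2 0) by
    rw [Ccoef]; norm_num [Finset.prod_range_one]]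

lemma nonclassicalOp_single_zero {n : ℕ} (ε : Fin (n - 1) → ℂ) (m : Fin (n / 2) → ℤ)
    (g : Fin (n - 1)) (hg : (g : ℕ) = 0) (α : GTn n m) :
    nonclassicalOp q s n ε m g (Finsupp.single α 1) =
      (ε g * qnumP q s (lc α.1 2 0)) • Finsupp.single α 1 := by
  rw [nonclassicalOp]
  rw [Finsupp.lift_apply, Finsupp.sum_single_index (by simp)]
  rw [hg]
  norm_num
  rw [actEvenN]
  norm_num
  rw [show ChatCoef q s α.1 1 = qnumP q s (lc α.1 2 0) by
    rw [ChatCoef]; norm_num [Finset.prod_range_one]]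

end ModelLemmas

/-- **Proposition 3.** Let `n ≥ 4` and suppose Assumption(n-1) holds.  The restriction
of an irreducible finite-dimensional representation of `U'_q(so_n)` to
`U'_q(so_{n-1})` is completely reducible and, in its decomposition into irreducible
subrepresentations, either every summand is of classical type or every summand is of
nonclassical type. -/
theorem restriction_completely_reducible_one_type (q s : ℂ) (hq : q ≠ 0) (hs : s ^ 2 = q)
    (hroot : ∀ k : ℕ, 0 < k → q ^ k ≠ 1) (n : ℕ) (hn : 4 ≤ n)
    (hA : Assumption q s (n - 1)) (R : Rep q n) (hirr : Irr R.T) :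
    CompRed (R.res (Nat.sub_le n 1)) ∧
    ∀ (ι : Type) (W : ι → Submodule ℂ R.V)
      (hD : IsDecomp (R.res (Nat.sub_le n 1)) W),
      (∀ i, ∃ m : Fin ((n - 1) / 2) → ℤ, ClassicalWeight (n - 1) m ∧
        IsClassicalModel q s (subRep (R.res (Nat.sub_le n 1)) (W i) (hD.1 i).1) m) ∨
      (∀ i, ∃ (ε : Fin (n - 1 - 1) → ℂ) (m : Fin ((n - 1) / 2) → ℤ),
        IsSign ε ∧ NonclassicalWeight (n - 1) m ∧
          IsNonclassicalModel q s (subRep (R.res (Nat.sub_le n 1)) (W i) (hD.1 i).1) ε m) := by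
  constructor
  · exact hA.1 (Rep.mk R.V (R.res (Nat.sub_le n 1)))
  · intro ι W hD
    set C : ι → Prop := fun i =>
      ∃ m : Fin ((n - 1) / 2) → ℤ, ClassicalWeight (n - 1) m ∧
        IsClassicalModel q s (subRep (R.res (Nat.sub_le n 1)) (W i) (hD.1 i).1) m with hCdef
    set NN : ι → Prop := fun i =>
      ∃ (ε : Fin (n - 1 - 1) → ℂ) (m : Fin ((n - 1) / 2) → ℤ),
        IsSign ε ∧ NonclassicalWeight (n - 1) m ∧
          IsNonclassicalModel q s (subRep (R.res (Nat.sub_le n 1)) (W i) (hD.1 i).1) ε m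
      with hNdef
    have hCN : ∀ i, C i ∨ NN i := by
      intro i
      haveI : Nontrivial ↥(W i) := Submodule.nontrivial_iff_ne_bot.mpr (hD.1 i).2.1
      exact hA.2 (Rep.mk ↥(W i) (subRep (R.res (Nat.sub_le n 1)) (W i) (hD.1 i).1))
        (irr_subRep _ _ (hD.1 i))
    by_cases hAllC : ∀ i, C i
    · exact Or.inl hAllC
    by_cases hAllN : ∀ i, NN i
    · exact Or.inr hAllN
    exfalso
    obtain ⟨i₀, hi₀⟩ := not_forall.mp hAllC
    obtain ⟨i₁, hi₁⟩ := not_forall.mp hAllN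
    have hi₁C : C i₁ := (hCN i₁).resolve_right hi₁
    -- index bounds
    have h0n : 0 < n - 1 := by omega
    have h0m : 0 < n - 1 - 1 := by omega
    have hlastn : n - 2 < n - 1 := by omega
    -- the distinguished operators
    set A : Module.End ℂ R.V := R.T (gen q n ⟨0, h0n⟩) with hAdef
    set J : Module.End ℂ R.V := R.T (gen q n ⟨n - 2, hlastn⟩) with hJdef
    have hgen0 : incl q (Nat.sub_le n 1) (gen q (n - 1) ⟨0, h0m⟩) = gen q n ⟨0, h0n⟩ := by
      rw [incl_gen]
      rfl
    -- eigenvalue predicates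
    set Pc : ℂ → Prop := fun c => ∃ t : ℤ, c = Complex.I * qnum q s t with hPcdef
    set Pn : ℂ → Prop := fun c => ∃ t : ℤ, c = qnumP q s t ∨ c = -qnumP q s t with hPndef
    have hPcPn : ∀ c, Pc c → Pn c → False := by
      rintro c ⟨t, rfl⟩ ⟨t', ht'⟩
      exact classical_ne_nonclassical hq hs hroot t t' ht'
    -- classical summands lie in classical eigenspaces of A
    have hclassical : ∀ i, C i →
        W i ≤ ⨆ c, ⨆ _ : Pc c, Module.End.eigenspace A c := by
      intro i hi
      obtain ⟨m, _, e, he⟩ := hi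
      refine le_biSup_eigenspace A (W i) e Pc fun α => ?_
      refine ⟨Complex.I * qnum q s (lc α.1 2 0), ⟨lc α.1 2 0, rfl⟩, ?_⟩
      have h1 : subRep (R.res (Nat.sub_le n 1)) (W i) (hD.1 i).1 (gen q (n - 1) ⟨0, h0m⟩)
          (e.symm (Finsupp.single α 1)) =
          (Complex.I * qnum q s (lc α.1 2 0)) • e.symm (Finsupp.single α 1) := by
        apply e.injective
        rw [map_smul, he ⟨0, h0m⟩ (e.symm (Finsupp.single α 1)), e.apply_symm_apply]
        exact classicalOp_single_zero q s m ⟨0, h0m⟩ rfl α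
      calc A ↑(e.symm (Finsupp.single α 1))
          = R.T (incl q (Nat.sub_le n 1) (gen q (n - 1) ⟨0, h0m⟩))
              ↑(e.symm (Finsupp.single α 1)) := by rw [hgen0]
        _ = ↑(subRep (R.res (Nat.sub_le n 1)) (W i) (hD.1 i).1 (gen q (n - 1) ⟨0, h0m⟩)
              (e.symm (Finsupp.single α 1))) := rfl
        _ = (Complex.I * qnum q s (lc α.1 2 0)) • ↑(e.symm (Finsupp.single α 1)) := by
              rw [h1]; rfl
    -- nonclassical summands lie in nonclassical eigenspaces of A
    have hnonclassical : ∀ i, NN i →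
        W i ≤ ⨆ c, ⨆ _ : Pn c, Module.End.eigenspace A c := by
      intro i hi
      obtain ⟨ε, m, hsign, _, e, he⟩ := hi
      refine le_biSup_eigenspace A (W i) e Pn fun α => ?_
      refine ⟨ε ⟨0, h0m⟩ * qnumP q s (lc α.1 2 0), ?_, ?_⟩
      · refine ⟨lc α.1 2 0, ?_⟩
        rcases hsign ⟨0, h0m⟩ with hε | hε <;> rw [hε]
        · exact Or.inl (one_mul _)
        · exact Or.inr (by rw [neg_one_mul])
      · have h1 : subRep (R.res (Nat.sub_le n 1)) (W i) (hD.1 i).1 (gen q (n - 1) ⟨0, h0m⟩)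
            (e.symm (Finsupp.single α 1)) =
            (ε ⟨0, h0m⟩ * qnumP q s (lc α.1 2 0)) • e.symm (Finsupp.single α 1) := by
          apply e.injective
          rw [map_smul, he ⟨0, h0m⟩ (e.symm (Finsupp.single α 1)), e.apply_symm_apply]
          exact nonclassicalOp_single_zero q s ε m ⟨0, h0m⟩ rfl α
        calc A ↑(e.symm (Finsupp.single α 1))
            = R.T (incl q (Nat.sub_le n 1) (gen q (n - 1) ⟨0, h0m⟩))
                ↑(e.symm (Finsupp.single α 1)) := by rw [hgen0]
          _ = ↑(subRep (R.res (Nat.sub_le n 1)) (W i) (hD.1 i).1 (gen q (n - 1) ⟨0, h0m⟩)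
                (e.symm (Finsupp.single α 1))) := rfl
          _ = (ε ⟨0, h0m⟩ * qnumP q s (lc α.1 2 0)) • ↑(e.symm (Finsupp.single α 1)) := by
                rw [h1]; rfl
    -- the two invariant pieces
    set Vc : Submodule ℂ R.V := ⨆ i, ⨆ _ : C i, W i with hVcdef
    set Vn : Submodule ℂ R.V := ⨆ i, ⨆ _ : ¬ C i, W i with hVndef
    set M : Submodule ℂ R.V := ⨆ c, ⨆ _ : Pc c, Module.End.eigenspace A c with hMdef
    set Mn : Submodule ℂ R.V := ⨆ c, ⨆ _ : Pn c, Module.End.eigenspace A c with hMndef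
    have hMMn : Disjoint M Mn :=
      disjoint_biSup_biSup (Module.End.eigenspaces_iSupIndep A) hPcPn
    have hVcM : Vc ≤ M := iSup₂_le fun i hi => hclassical i hi
    have hVnMn : Vn ≤ Mn := iSup₂_le fun i hi => hnonclassical i ((hCN i).resolve_left hi)
    have hsupTop : Vc ⊔ Vn = ⊤ := by
      rw [eq_top_iff, ← hD.2.2]
      refine iSup_le fun i => ?_
      by_cases hi : C i
      · exact le_sup_of_le_left (le_iSup₂ (f := fun i (_ : C i) => W i) i hi)
      · exact le_sup_of_le_right (le_iSup₂ (f := fun i (_ : ¬ C i) => W i) i hi)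
    have hMVc : M ≤ Vc := by
      intro u hu
      have hu' : u ∈ Vc ⊔ Vn := by rw [hsupTop]; exact Submodule.mem_top
      obtain ⟨x, hx, y, hy, hxy⟩ := Submodule.mem_sup.mp hu'
      have hyM : y ∈ M := by
        have h2 : y = u - x := by rw [← hxy]; abel
        rw [h2]
        exact sub_mem hu (hVcM hx)
      have hy0 : y = 0 := Submodule.disjoint_def.mp hMMn y hyM (hVnMn hy)
      rw [← hxy, hy0, add_zero]
      exact hx
    -- Vc is invariant under the whole algebra
    have hVcInv : Invariant R.T Vc := by
      apply invariant_of_forall_gen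
      intro g
      by_cases hg : (g : ℕ) < n - 2
      · refine mapsto_biSup _ W C fun i hi v hv => ?_
        have hg' : g = Fin.castLE (Nat.sub_le_sub_right (Nat.sub_le n 1) 1)
            ⟨(g : ℕ), by omega⟩ := Fin.ext rfl
        rw [hg', ← incl_gen]
        exact (hD.1 i).1 _ v hv
      · have hg' : g = (⟨n - 2, hlastn⟩ : Fin (n - 1)) :=
          Fin.ext (show (g : ℕ) = n - 2 from by have := g.isLt; omega)
        rw [hg']
        intro v hv
        -- J preserves M, hence Vc
        have hcm := congrArg R.T
          (gen_comm (q := q) (⟨0, h0n⟩ : Fin (n - 1)) ⟨n - 2, hlastn⟩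
            (by omega : (0 : ℕ) + 1 < n - 2))
        have hcomm : ∀ u, A (J u) = J (A u) := by
          intro u
          have h1 := congrArg (fun f : Module.End ℂ R.V => f u) hcm
          simpa [map_mul, Module.End.mul_apply, hAdef, hJdef] using h1
        have hJM : ∀ u ∈ M, J u ∈ M := by
          refine mapsto_biSup J (fun c => Module.End.eigenspace A c) Pc fun c _ u hu => ?_
          rw [Module.End.mem_eigenspace_iff] at hu ⊢
          rw [hcomm u, hu, map_smul]
        exact hMVc (hJM v (hVcM hv))
    -- contradiction with irreducibility
    rcases hirr Vc hVcInv with hbot | htop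
    · refine (hD.1 i₁).2.1 (le_bot_iff.mp ?_)
      rw [← hbot]
      exact le_iSup₂ (f := fun i (_ : C i) => W i) i₁ hi₁C
    · have hVcle : Vc ≤ ⨆ j, ⨆ _ : j ≠ i₀, W j :=
        iSup₂_le fun j hj =>
          le_iSup₂ (f := fun j (_ : j ≠ i₀) => W j) j (fun he => hi₀ (he ▸ hj))
      have hdisj : Disjoint (W i₀) Vc := (hD.2.1 i₀).mono_right hVcle
      rw [htop] at hdisj
      exact (hD.1 i₀).2.1 (disjoint_top.mp hdisj)

end UqSO
end
end

section
/- Let p ≥ 2. Let l_1, …, l_p be half-integers such that the 2p complex numbers [l_1]_+^2, …, [l_p]_+^2, [l_1-1]_+^2, …, [l_p-1]_+^2 are pairwise distinct and nonzero, and let L_1, …, L_{p+1} be half-integers. Define β(x) = Π_{r=1}^{p+1} ([x]_+^2 - [L_r]_+^2), c_i(x) = Π_{r≠i} ([l_r]_+^2 - [x]_+^2)([l_r-1]_+^2 - [x]_+^2), and σ = Π_{r=1}^{p+1} [L_r]_+. Then β(x) = Π_{r=1}^{p+1} ([x]^2 - [L_r]^2) for every half-integer x, and: (i) Σ_{i=1}^p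 (1/[2l_i-1]) ( β(l_i)/([l_i]_+^2 c_i(l_i)) - β(l_i-1)/([l_i-1]_+^2 c_i(l_i-1)) ) = (-1)^{p} σ^2 / ( Π_{r=1}^p [l_r]_+^2 [l_r-1]_+^2 ); (ii) Σ_{i=1}^p (1/[2l_i-1]) ( [l_i]_+^{2ν} β(l_i)/c_i(l_i) - [l_i-1]_+^{2ν} β(l_i-1)/c_i(l_i-1) ) = 0 for every ν = 0, 1, …, p-3; (iii) Σ_{i=1}^p (1/[2l_i-1]) ( [l_i]_+^{2p-4} β(l_i)/c_i(l_i) - [l_i-1]_+^{2p-4} β(l_i-1)/c_i(l_i-1) ) = 1. -/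
noncomputable section

open Finset Polynomial Sum

section Aux

lemma coeff_basis' {F : Type*} [Field F] {ι : Type*} [DecidableEq ι] {s : Finset ι} {v : ι → F}
    (hvs : Set.InjOn v s) {i : ι} (hi : i ∈ s) :
    (Lagrange.basis s v i).coeff (#s - 1) = (∏ j ∈ s.erase i, (v i - v j))⁻¹ := by
  rw [← Lagrange.natDegree_basis hvs hi, Polynomial.coeff_natDegree, Lagrange.basis,
    Polynomial.leadingCoeff_prod, ← Finset.prod_inv_distrib]
  refine Finset.prod_congr rfl fun j hj => ?_
  have hne : v i ≠ v j := by
    have := (Finset.mem_erase.mp hj)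
    exact fun h => this.1 (hvs (Finset.mem_erase.mp hj).2 hi h.symm ▸ rfl)
  rw [Lagrange.basisDivisor, leadingCoeff_mul, leadingCoeff_C, (monic_X_sub_C (v j)).leadingCoeff,
    mul_one]

lemma lagrange_coeff_sum {F : Type*} [Field F] {ι : Type*} [DecidableEq ι] (s : Finset ι)
    (v : ι → F) (hvs : Set.InjOn v s) (g : F[X]) (hd : g.degree < #s) :
    ∑ i ∈ s, g.eval (v i) * (∏ j ∈ s.erase i, (v i - v j))⁻¹ = g.coeff (#s - 1) := by
  conv_rhs => rw [Lagrange.eq_interpolate hvs hd]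
  rw [Lagrange.interpolate_apply, Polynomial.finset_sum_coeff]
  refine Finset.sum_congr rfl fun i hi => ?_
  rw [Polynomial.coeff_C_mul, coeff_basis' hvs hi]

variable {M : Type*} [CommMonoid M]

lemma erase_univ_inl {α β : Type*} [Fintype α] [Fintype β] [DecidableEq α] [DecidableEq β]
    (i : α) : (univ : Finset (α ⊕ β)).erase (inl i) = (univ.erase i).disjSum univ := by
  ext x; cases x <;> simp [eq_comm, Sum.inl.injEq]

lemma erase_univ_inr {α β : Type*} [Fintype α] [Fintype β] [DecidableEq α] [DecidableEq β]
    (i : β) : (univ : Finset (α ⊕ β)).erase (inr i) = univ.disjSum (univ.erase i) := by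
  ext x; cases x <;> simp [eq_comm]

lemma prod_erase_inl {α β : Type*} [Fintype α] [Fintype β] [DecidableEq α] [DecidableEq β]
    (f : α ⊕ β → M) (i : α) :
    ∏ k ∈ (univ : Finset (α ⊕ β)).erase (inl i), f k
      = (∏ a ∈ univ.erase i, f (inl a)) * ∏ b, f (inr b) := by
  rw [erase_univ_inl, Finset.prod_disjSum]

lemma prod_erase_inr {α β : Type*} [Fintype α] [Fintype β] [DecidableEq α] [DecidableEq β]
    (f : α ⊕ β → M) (i : β) :
    ∏ k ∈ (univ : Finset (α ⊕ β)).erase (inr i), f k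
      = (∏ a, f (inl a)) * ∏ b ∈ univ.erase i, f (inr b) := by
  rw [erase_univ_inr, Finset.prod_disjSum]

lemma erase_univ_none {α : Type*} [Fintype α] [DecidableEq α] :
    (univ : Finset (Option α)).erase none = univ.image some := by
  ext x; cases x <;> simp

lemma erase_univ_some {α : Type*} [Fintype α] [DecidableEq α] (j : α) :
    (univ : Finset (Option α)).erase (some j) = insert none ((univ.erase j).image some) := by
  ext x; cases x <;> simp

lemma prod_erase_none {α : Type*} [Fintype α] [DecidableEq α] (f : Option α → M) :
    ∏ k ∈ (univ : Finset (Option α)).erase none, f k = ∏ a, f (some a) := by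
  rw [erase_univ_none, Finset.prod_image (fun a _ b _ h => Option.some_injective _ h)]

lemma prod_erase_some {α : Type*} [Fintype α] [DecidableEq α] (f : Option α → M) (j : α) :
    ∏ k ∈ (univ : Finset (Option α)).erase (some j), f k
      = f none * ∏ a ∈ univ.erase j, f (some a) := by
  rw [erase_univ_some, Finset.prod_insert (by simp),
    Finset.prod_image (fun a _ b _ h => Option.some_injective _ h)]

lemma pair_sum {p : ℕ} (u v : Fin p → ℂ) (hinj : Function.Injective (Sum.elim u v))
    (g : ℂ[X]) (hd : g.degree < 2 * p) :
    ∑ i, (u i - v i)⁻¹ *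
        (g.eval (u i) * (∏ r ∈ univ.erase i, (u r - u i) * (v r - u i))⁻¹ -
          g.eval (v i) * (∏ r ∈ univ.erase i, (u r - v i) * (v r - v i))⁻¹)
      = g.coeff (2 * p - 1) := by
  have hcard : #(univ : Finset (Fin p ⊕ Fin p)) = 2 * p := by
    simp [Finset.card_univ, two_mul]
  have key := lagrange_coeff_sum (univ : Finset (Fin p ⊕ Fin p)) (Sum.elim u v)
    hinj.injOn g (by rw [hcard]; exact hd)
  rw [hcard] at key
  rw [← key, Fintype.sum_sum_type, ← Finset.sum_add_distrib]
  refine Finset.sum_congr rfl fun i _ => ?_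
  have h1 : ∏ k ∈ (univ : Finset (Fin p ⊕ Fin p)).erase (inl i),
      (Sum.elim u v (inl i) - Sum.elim u v k)
      = (u i - v i) * ∏ r ∈ univ.erase i, (u r - u i) * (v r - u i) := by
    rw [prod_erase_inl]
    simp only [Sum.elim_inl, Sum.elim_inr]
    rw [← Finset.mul_prod_erase univ (fun r => u i - v r) (Finset.mem_univ i), mul_comm,
      mul_assoc, ← Finset.prod_mul_distrib]
    congr 1
    · exact Finset.prod_congr rfl fun r _ => by ring
  have h2 : ∏ k ∈ (univ : Finset (Fin p ⊕ Fin p)).erase (inr i),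
      (Sum.elim u v (inr i) - Sum.elim u v k)
      = -((u i - v i) * ∏ r ∈ univ.erase i, (u r - v i) * (v r - v i)) := by
    rw [prod_erase_inr]
    simp only [Sum.elim_inl, Sum.elim_inr]
    rw [← Finset.mul_prod_erase univ (fun r => v i - u r) (Finset.mem_univ i),
      mul_assoc, ← Finset.prod_mul_distrib]
    have : v i - u i = -(u i - v i) := by ring
    rw [this, neg_mul]
    congr 2
    exact Finset.prod_congr rfl fun r _ => by ring
  rw [h1, h2]
  simp only [Sum.elim_inl, Sum.elim_inr]
  rw [mul_inv, inv_neg, mul_inv]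
  ring

lemma pair_sum_zero {p : ℕ} (u v : Fin p → ℂ) (hinj : Function.Injective (Sum.elim u v))
    (hu : ∀ i, u i ≠ 0) (hv : ∀ i, v i ≠ 0) (g : ℂ[X]) (hd : g.degree < 2 * p + 1) :
    g.eval 0 * (∏ r, u r * v r)⁻¹ +
      ∑ i, (u i - v i)⁻¹ *
        (g.eval (u i) * (u i * ∏ r ∈ univ.erase i, (u r - u i) * (v r - u i))⁻¹ -
          g.eval (v i) * (v i * ∏ r ∈ univ.erase i, (u r - v i) * (v r - v i))⁻¹)
      = g.coeff (2 * p) := by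
  set w : Option (Fin p ⊕ Fin p) → ℂ := fun o => o.elim 0 (Sum.elim u v) with hw
  have hwne : ∀ k, Sum.elim u v k ≠ 0 := by rintro (a | b) <;> [exact hu a; exact hv b]
  have winj : Function.Injective w := by
    rintro (_ | a) (_ | b) h
    · rfl
    · exact absurd h.symm (hwne b)
    · exact absurd h (hwne a)
    · exact congrArg _ (hinj h)
  have hcard : #(univ : Finset (Option (Fin p ⊕ Fin p))) = 2 * p + 1 := by
    simp [Finset.card_univ, two_mul]
  have key := lagrange_coeff_sum (univ : Finset (Option (Fin p ⊕ Fin p))) w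
    winj.injOn g (by rw [hcard]; exact_mod_cast hd)
  rw [hcard] at key
  simp only [Nat.add_sub_cancel] at key
  rw [← key, Fintype.sum_option]
  congr 1
  · -- the `none` term
    have : ∏ j ∈ (univ : Finset (Option (Fin p ⊕ Fin p))).erase none, (w none - w j)
        = ∏ r, u r * v r := by
      rw [prod_erase_none]
      show ∏ a : Fin p ⊕ Fin p, ((0 : ℂ) - Sum.elim u v a) = _
      rw [Fintype.prod_sum_type, ← Finset.prod_mul_distrib]
      exact Finset.prod_congr rfl fun r _ => by simp only [Sum.elim_inl, Sum.elim_inr]; ring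
    rw [this]; rfl
  · rw [Fintype.sum_sum_type, ← Finset.sum_add_distrib]
    refine Finset.sum_congr rfl fun i _ => ?_
    have h1 : ∏ k ∈ (univ : Finset (Fin p ⊕ Fin p)).erase (inl i),
        (Sum.elim u v (inl i) - Sum.elim u v k)
        = (u i - v i) * ∏ r ∈ univ.erase i, (u r - u i) * (v r - u i) := by
      rw [prod_erase_inl]
      simp only [Sum.elim_inl, Sum.elim_inr]
      rw [← Finset.mul_prod_erase univ (fun r => u i - v r) (Finset.mem_univ i), mul_comm,
        mul_assoc, ← Finset.prod_mul_distrib]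
      congr 1
      · exact Finset.prod_congr rfl fun r _ => by ring
    have h2 : ∏ k ∈ (univ : Finset (Fin p ⊕ Fin p)).erase (inr i),
        (Sum.elim u v (inr i) - Sum.elim u v k)
        = -((u i - v i) * ∏ r ∈ univ.erase i, (u r - v i) * (v r - v i)) := by
      rw [prod_erase_inr]
      simp only [Sum.elim_inl, Sum.elim_inr]
      rw [← Finset.mul_prod_erase univ (fun r => v i - u r) (Finset.mem_univ i),
        mul_assoc, ← Finset.prod_mul_distrib]
      have : v i - u i = -(u i - v i) := by ring
      rw [this, neg_mul]
      congr 2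
      exact Finset.prod_congr rfl fun r _ => by ring
    have e1 : ∏ j ∈ (univ : Finset (Option (Fin p ⊕ Fin p))).erase (some (inl i)),
        (w (some (inl i)) - w j)
        = u i * ((u i - v i) * ∏ r ∈ univ.erase i, (u r - u i) * (v r - u i)) := by
      rw [prod_erase_some, ← h1]
      show (u i - 0) * _ = _
      rw [sub_zero]; rfl
    have e2 : ∏ j ∈ (univ : Finset (Option (Fin p ⊕ Fin p))).erase (some (inr i)),
        (w (some (inr i)) - w j)
        = v i * -((u i - v i) * ∏ r ∈ univ.erase i, (u r - v i) * (v r - v i)) := by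
      rw [prod_erase_some, ← h2]
      show (v i - 0) * _ = _
      rw [sub_zero]; rfl
    rw [e1, e2]
    show (u i - v i)⁻¹ * (eval (u i) g * _ - eval (v i) g * _) = eval (u i) g * _ + eval (v i) g * _
    simp only [mul_inv, inv_neg, mul_neg]
    ring

end Aux

namespace UqSO

/-- `β(x) = ∏_{r=1}^{p+1} ([x]₊² - [L_r]₊²)` (doubled arguments). -/
def betaP (q s : ℂ) {p : ℕ} (L : Fin (p + 1) → ℤ) (x : ℤ) : ℂ :=
  ∏ r, (qnumP q s x ^ 2 - qnumP q s (L r) ^ 2)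

/-- `c_i(x) = ∏_{r≠i} ([l_r]₊² - [x]₊²)([l_r - 1]₊² - [x]₊²)` (doubled arguments). -/
def cP (q s : ℂ) {p : ℕ} (l : Fin p → ℤ) (i : Fin p) (x : ℤ) : ℂ :=
  ∏ r ∈ Finset.univ.erase i,
    (qnumP q s (l r) ^ 2 - qnumP q s x ^ 2) * (qnumP q s (l r - 2) ^ 2 - qnumP q s x ^ 2)

variable {q s : ℂ}

lemma hs0 (hq : q ≠ 0) (hs : s ^ 2 = q) : s ≠ 0 := by
  rintro rfl; exact hq (by simpa using hs.symm)

lemma hden (hq : q ≠ 0) (hroot : ∀ k : ℕ, 0 < k → q ^ k ≠ 1) : q - q⁻¹ ≠ 0 := by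
  intro h
  have : q = q⁻¹ := sub_eq_zero.mp h
  exact hroot 2 (by norm_num) (by rw [pow_two]; nth_rewrite 2 [this]; exact mul_inv_cancel₀ hq)

lemma qP_sq_sub (hq : q ≠ 0) (hs : s ^ 2 = q) (a b : ℤ) :
    qnumP q s a ^ 2 - qnumP q s b ^ 2 = qnum q s (a + b) * qnum q s (a - b) := by
  have h0 := hs0 hq hs
  rw [qnumP, qnumP, qnum, qnum, div_pow, div_pow, ← sub_div, div_mul_div_comm, ← pow_two]
  congr 1
  have ha : s ^ a * (s ^ a)⁻¹ = 1 := mul_inv_cancel₀ (zpow_ne_zero a h0)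
  have hb : s ^ b * (s ^ b)⁻¹ = 1 := mul_inv_cancel₀ (zpow_ne_zero b h0)
  simp only [zpow_add₀ h0, zpow_sub₀ h0, zpow_neg, neg_add, div_eq_mul_inv, mul_inv, inv_inv]
  linear_combination (2 + (s ^ b) ^ 2 + ((s ^ b)⁻¹) ^ 2) * ha -
    (2 + (s ^ a) ^ 2 + ((s ^ a)⁻¹) ^ 2) * hb

lemma q_sq_sub (hq : q ≠ 0) (hs : s ^ 2 = q) (a b : ℤ) :
    qnumP q s a ^ 2 - qnumP q s b ^ 2 = qnum q s a ^ 2 - qnum q s b ^ 2 := by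
  have h0 := hs0 hq hs
  have key : ∀ t : ℤ, qnumP q s t ^ 2 = qnum q s t ^ 2 + 4 / (q - q⁻¹) ^ 2 := by
    intro t
    have hxy : s ^ t * s ^ (-t) = 1 := by
      rw [zpow_neg, mul_inv_cancel₀ (zpow_ne_zero _ h0)]
    rw [qnumP, qnum, div_pow, div_pow, ← add_div]
    congr 1
    linear_combination 4 * hxy
  rw [key, key]; ring

lemma qnum_two (hq : q ≠ 0) (hs : s ^ 2 = q) (hroot : ∀ k : ℕ, 0 < k → q ^ k ≠ 1) :
    qnum q s 2 = 1 := by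
  have h0 := hs0 hq hs
  rw [qnum, div_eq_one_iff_eq (hden hq hroot)]
  have h2 : s ^ (2 : ℤ) = q := by
    rw [← hs, show ((2 : ℤ)) = ((2 : ℕ) : ℤ) by norm_num, zpow_natCast]
  rw [h2, zpow_neg, h2]

/-- The system (68)–(70) of Iorgov–Klimyk (nonclassical case). -/
theorem nonclassical_reduced_matrix_identities (q s : ℂ) (hq : q ≠ 0) (hs : s ^ 2 = q)
    (hroot : ∀ k : ℕ, 0 < k → q ^ k ≠ 1)
    (p : ℕ) (hp : 2 ≤ p) (l : Fin p → ℤ) (L : Fin (p + 1) → ℤ)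
    (hdist : Function.Injective
      (Sum.elim (fun i : Fin p => qnumP q s (l i) ^ 2)
        (fun i : Fin p => qnumP q s (l i - 2) ^ 2)))
    (hne1 : ∀ i, qnumP q s (l i) ^ 2 ≠ 0) (hne2 : ∀ i, qnumP q s (l i - 2) ^ 2 ≠ 0) :
    (∀ x : ℤ, betaP q s L x = ∏ r, (qnum q s x ^ 2 - qnum q s (L r) ^ 2)) ∧
    (∑ i, (1 / qnum q s (2 * l i - 2)) *
        (betaP q s L (l i) / (qnumP q s (l i) ^ 2 * cP q s l i (l i)) -
          betaP q s L (l i - 2) / (qnumP q s (l i - 2) ^ 2 * cP q s l i (l i - 2))) =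
      (-1) ^ p * (∏ r, qnumP q s (L r)) ^ 2 /
        ∏ r, (qnumP q s (l r) ^ 2 * qnumP q s (l r - 2) ^ 2)) ∧
    (∀ ν : ℕ, ν + 3 ≤ p →
      ∑ i, (1 / qnum q s (2 * l i - 2)) *
        (qnumP q s (l i) ^ (2 * ν) * betaP q s L (l i) / cP q s l i (l i) -
          qnumP q s (l i - 2) ^ (2 * ν) * betaP q s L (l i - 2) / cP q s l i (l i - 2)) = 0) ∧
    (∑ i, (1 / qnum q s (2 * l i - 2)) *
        (qnumP q s (l i) ^ (2 * p - 4) * betaP q s L (l i) / cP q s l i (l i) -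
          qnumP q s (l i - 2) ^ (2 * p - 4) * betaP q s L (l i - 2) /
            cP q s l i (l i - 2)) = 1) := by
  classical
  set u : Fin p → ℂ := fun i => qnumP q s (l i) ^ 2 with hu
  set v : Fin p → ℂ := fun i => qnumP q s (l i - 2) ^ 2 with hv
  set f : ℂ[X] := ∏ r : Fin (p + 1), (X - C (qnumP q s (L r) ^ 2)) with hfdef
  have hmf : f.Monic := monic_prod_of_monic _ _ fun r _ => monic_X_sub_C _
  have hnd : f.natDegree = p + 1 := by
    rw [hfdef, Polynomial.natDegree_prod _ _ fun r _ => X_sub_C_ne_zero _]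
    simp only [natDegree_X_sub_C]
    simp
  have hfe : ∀ t : ℂ, f.eval t = ∏ r, (t - qnumP q s (L r) ^ 2) := fun t => by
    simp [hfdef, eval_prod]
  have hbe : ∀ x : ℤ, betaP q s L x = f.eval (qnumP q s x ^ 2) := fun x => by
    rw [hfe]; rfl
  have huv : ∀ i, u i - v i = qnum q s (2 * l i - 2) := by
    intro i
    show qnumP q s (l i) ^ 2 - qnumP q s (l i - 2) ^ 2 = _
    rw [qP_sq_sub hq hs, show l i + (l i - 2) = 2 * l i - 2 by ring,
      show l i - (l i - 2) = 2 by ring, qnum_two hq hs hroot, mul_one]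
  have hcPu : ∀ i, cP q s l i (l i) = ∏ r ∈ univ.erase i, (u r - u i) * (v r - u i) :=
    fun i => rfl
  have hcPv : ∀ i, cP q s l i (l i - 2) = ∏ r ∈ univ.erase i, (u r - v i) * (v r - v i) :=
    fun i => rfl
  refine ⟨?_, ?_, ?_, ?_⟩
  · intro x
    rw [betaP]
    exact Finset.prod_congr rfl fun r _ => q_sq_sub hq hs x (L r)
  · -- part (i)
    have hdeg1 : f.degree < ((2 * p + 1 : ℕ) : WithBot ℕ) := by
      rw [Polynomial.degree_eq_natDegree hmf.ne_zero, hnd]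
      exact_mod_cast (by omega : p + 1 < 2 * p + 1)
    have hkey := pair_sum_zero u v hdist hne1 hne2 f (by exact_mod_cast hdeg1)
    have hco : f.coeff (2 * p) = 0 :=
      coeff_eq_zero_of_natDegree_lt (by rw [hnd]; omega)
    rw [hco] at hkey
    have hsum : ∑ i, (1 / qnum q s (2 * l i - 2)) *
        (betaP q s L (l i) / (u i * cP q s l i (l i)) -
          betaP q s L (l i - 2) / (v i * cP q s l i (l i - 2)))
        = ∑ i, (u i - v i)⁻¹ *
          (f.eval (u i) * (u i * ∏ r ∈ univ.erase i, (u r - u i) * (v r - u i))⁻¹ -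
            f.eval (v i) * (v i * ∏ r ∈ univ.erase i, (u r - v i) * (v r - v i))⁻¹) := by
      refine Finset.sum_congr rfl fun i _ => ?_
      rw [← huv i, one_div, hbe (l i), hbe (l i - 2), hcPu, hcPv, div_eq_mul_inv,
        div_eq_mul_inv]
    have hev0 : f.eval 0 = (-1) ^ (p + 1) * ∏ r, qnumP q s (L r) ^ 2 := by
      rw [hfe]
      calc ∏ r, ((0 : ℂ) - qnumP q s (L r) ^ 2)
          = ∏ r, (-1 : ℂ) * qnumP q s (L r) ^ 2 := by
            refine Finset.prod_congr rfl fun r _ => by ring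
        _ = (∏ _r : Fin (p + 1), (-1 : ℂ)) * ∏ r, qnumP q s (L r) ^ 2 :=
            Finset.prod_mul_distrib
        _ = (-1) ^ (p + 1) * ∏ r, qnumP q s (L r) ^ 2 := by
            simp [Finset.prod_const, Finset.card_univ]
    rw [hsum, eq_neg_of_add_eq_zero_right hkey, hev0, div_eq_mul_inv, ← Finset.prod_pow,
      pow_succ]
    ring
  · -- part (ii)
    have main : ∀ m : ℕ, m + 2 ≤ p → ∑ i, (1 / qnum q s (2 * l i - 2)) *
        (qnumP q s (l i) ^ (2 * m) * betaP q s L (l i) / cP q s l i (l i) -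
          qnumP q s (l i - 2) ^ (2 * m) * betaP q s L (l i - 2) / cP q s l i (l i - 2))
        = ((X : ℂ[X]) ^ m * f).coeff (2 * p - 1) := by
      intro m hm
      have hgm : ((X : ℂ[X]) ^ m * f).Monic := (monic_X_pow m).mul hmf
      have hgnd : ((X : ℂ[X]) ^ m * f).natDegree = m + (p + 1) := by
        rw [natDegree_mul (pow_ne_zero _ X_ne_zero) hmf.ne_zero, natDegree_X_pow, hnd]
      have hdeg : ((X : ℂ[X]) ^ m * f).degree < ((2 * p : ℕ) : WithBot ℕ) := by
        rw [Polynomial.degree_eq_natDegree hgm.ne_zero, hgnd]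
        exact_mod_cast (by omega : m + (p + 1) < 2 * p)
      have hkey := pair_sum u v hdist ((X : ℂ[X]) ^ m * f) (by exact_mod_cast hdeg)
      rw [← hkey]
      refine Finset.sum_congr rfl fun i _ => ?_
      have hev : ∀ t : ℂ, ((X : ℂ[X]) ^ m * f).eval t = t ^ m * f.eval t := fun t => by
        simp [eval_mul, eval_pow]
      rw [← huv i, one_div, hbe (l i), hbe (l i - 2), hcPu, hcPv, hev, hev,
        div_eq_mul_inv, div_eq_mul_inv]
      have e1 : qnumP q s (l i) ^ (2 * m) = u i ^ m := by
        rw [hu]; simp [pow_mul]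
      have e2 : qnumP q s (l i - 2) ^ (2 * m) = v i ^ m := by
        rw [hv]; simp [pow_mul]
      rw [e1, e2]
    intro ν hν
    rw [main ν (by omega)]
    exact coeff_eq_zero_of_natDegree_lt (by
      rw [natDegree_mul (pow_ne_zero _ X_ne_zero) hmf.ne_zero, natDegree_X_pow, hnd]; omega)
  · -- part (iii)
    have main : ∀ m : ℕ, m + 2 ≤ p → ∑ i, (1 / qnum q s (2 * l i - 2)) *
        (qnumP q s (l i) ^ (2 * m) * betaP q s L (l i) / cP q s l i (l i) -
          qnumP q s (l i - 2) ^ (2 * m) * betaP q s L (l i - 2) / cP q s l i (l i - 2))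
        = ((X : ℂ[X]) ^ m * f).coeff (2 * p - 1) := by
      intro m hm
      have hgm : ((X : ℂ[X]) ^ m * f).Monic := (monic_X_pow m).mul hmf
      have hgnd : ((X : ℂ[X]) ^ m * f).natDegree = m + (p + 1) := by
        rw [natDegree_mul (pow_ne_zero _ X_ne_zero) hmf.ne_zero, natDegree_X_pow, hnd]
      have hdeg : ((X : ℂ[X]) ^ m * f).degree < ((2 * p : ℕ) : WithBot ℕ) := by
        rw [Polynomial.degree_eq_natDegree hgm.ne_zero, hgnd]
        exact_mod_cast (by omega : m + (p + 1) < 2 * p)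
      have hkey := pair_sum u v hdist ((X : ℂ[X]) ^ m * f) (by exact_mod_cast hdeg)
      rw [← hkey]
      refine Finset.sum_congr rfl fun i _ => ?_
      have hev : ∀ t : ℂ, ((X : ℂ[X]) ^ m * f).eval t = t ^ m * f.eval t := fun t => by
        simp [eval_mul, eval_pow]
      rw [← huv i, one_div, hbe (l i), hbe (l i - 2), hcPu, hcPv, hev, hev,
        div_eq_mul_inv, div_eq_mul_inv]
      have e1 : qnumP q s (l i) ^ (2 * m) = u i ^ m := by
        rw [hu]; simp [pow_mul]
      have e2 : qnumP q s (l i - 2) ^ (2 * m) = v i ^ m := by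
        rw [hv]; simp [pow_mul]
      rw [e1, e2]
    have h24 : 2 * p - 4 = 2 * (p - 2) := by omega
    rw [h24, main (p - 2) (by omega)]
    have hgm : ((X : ℂ[X]) ^ (p - 2) * f).Monic := (monic_X_pow _).mul hmf
    have hgnd : ((X : ℂ[X]) ^ (p - 2) * f).natDegree = 2 * p - 1 := by
      rw [natDegree_mul (pow_ne_zero _ X_ne_zero) hmf.ne_zero, natDegree_X_pow, hnd]; omega
    rw [← hgnd]
    exact hgm.coeff_natDegree
end UqSO
end
end
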